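/- Let $X$ have unit-norm columns ($X^TX = \Sigma$ with $\Sigma_{ii} = 1$) and suppose $\mathrm{diag}(s) \preceq 2\Sigma$. If two columns satisfy $\langle X_i, X_j \rangle \geq 1 - \delta$ for some $i \neq j$, then $\min(s_i, s_j) \leq \|X_i - X_j\|_2^2 \leq 2\delta$. -/

import Mathlib

open Matrix

theorem knockoff_correlated_columns_small_s (n p : ℕ)
    (X : Matrix (Fin n) (Fin p) ℝ)
    (hnorm : ∀ i : Fin p, ∑ k, X k i ^ 2 = 1)
    (s : Fin p → ℝ)
    (hs : ((2 : ℝ) • (Xᵀ * X) - Matrix.diagonal s).PosSemidef)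
    (δ : ℝ) (i j : Fin p) (hij : i ≠ j)
    (hcorr : 1 - δ ≤ ∑ k, X k i * X k j) :
    min (s i) (s j) ≤ ∑ k, (X k i - X k j) ^ 2 ∧
      ∑ k, (X k i - X k j) ^ 2 ≤ 2 * δ := by
  set M := ((2 : ℝ) • (Xᵀ * X) - Matrix.diagonal s) with hM
  have key := hs.dotProduct_mulVec_nonneg (Pi.single i 1 - Pi.single j 1)
  have hq : (Pi.single i (1:ℝ) - Pi.single j 1) ⬝ᵥ (M *ᵥ (Pi.single i 1 - Pi.single j 1))
      = M i i - M i j - M j i + M j j := by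
    rw [mulVec_sub, sub_dotProduct, dotProduct_sub, dotProduct_sub]
    simp [mulVec_single, single_dotProduct]
    ring
  have hexp : ∑ k, (X k i - X k j) ^ 2 = 2 - 2 * ∑ k, X k i * X k j := by
    have := hnorm i
    have := hnorm j
    simp only [sub_sq]
    rw [Finset.sum_add_distrib, Finset.sum_sub_distrib]
    rw [hnorm i, hnorm j]
    have h2 : ∑ x, 2 * X x i * X x j = 2 * ∑ k, X k i * X k j := by
      rw [Finset.mul_sum]; exact Finset.sum_congr rfl fun k _ => by ring
    rw [h2]; ring
  have hMentry : ∀ a b : Fin p, M a b = 2 * (∑ k, X k a * X k b) - (if a = b then s a else 0) := by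
    intro a b
    simp [hM, Matrix.sub_apply, Matrix.smul_apply, Matrix.mul_apply, Matrix.diagonal_apply,
      Matrix.transpose_apply, Finset.mul_sum]
  rw [star_trivial, hq] at key
  rw [hMentry, hMentry, hMentry, hMentry] at key
  simp only [if_pos rfl, if_neg hij, if_neg hij.symm] at key
  have hii : ∑ k, X k i * X k i = 1 := by
    simpa [pow_two] using hnorm i
  have hjj : ∑ k, X k j * X k j = 1 := by
    simpa [pow_two] using hnorm j
  have hsym : ∑ k, X k j * X k i = ∑ k, X k i * X k j :=
    Finset.sum_congr rfl fun k _ => mul_comm _ _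
  simp only [if_true] at key
  rw [hii, hjj, hsym] at key
  constructor
  · have h1 : min (s i) (s j) ≤ (s i + s j) / 2 := by
      cases le_total (s i) (s j) with
      | inl h => rw [min_eq_left h]; linarith
      | inr h => rw [min_eq_right h]; linarith
    rw [hexp]; linarith
  · rw [hexp]; linarith
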